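/- For all nonzero complex numbers s and t, the 12×7 complex matrix A(1, s, t, (st)⁻¹, (st)⁻¹, t, 1) has rank at most 5; that is, the braid component Π₂ = Π(28|36|45) = {(1, s, t, (st)⁻¹, (st)⁻¹, t, 1, s) : s, t ∈ ℂ*} is contained in the first characteristic variety V₁(D). -/

import Mathlib

set_option maxHeartbeats 1000000


open Matrix

/-- The Alexander matrix of the fundamental group of the complement of the
deconed deleted B₃ arrangement, evaluated at `(t₁, …, t₇)`. -/
noncomputable def alexD (t₁ t₂ t₃ t₄ t₅ t₆ t₇ : ℂ) : Matrix (Fin 12) (Fin 7) ℂ :=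
  !![1 - t₅, 0, 0, 0, t₁ - 1, 0, 0;
     0, t₅ * (t₃ - 1), 1 - t₂ * t₅, 0, t₃ - 1, 0, 0;
     0, 1 - t₅, t₂ * (1 - t₅), 0, t₂ * t₃ - 1, 0, 0;
     0, 0, 0, 1 - t₅, t₄ - 1, 0, 0;
     t₆ * (t₃ - 1), (t₃ - 1) * (t₁ * t₆ - 1), t₂ * (1 - t₁ * t₆), 0, 0, t₃ - 1, 0;
     1 - t₆, t₁ * (t₃ - 1) * (t₆ - 1), t₁ * t₂ * (1 - t₆), 0, 0, t₁ * t₃ - 1, 0;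
     0, t₆ * (t₄ - 1), 0, 1 - t₂ * t₆, 0, t₄ - 1, 0;
     0, 1 - t₆, 0, t₂ * (1 - t₆), 0, t₂ * t₄ - 1, 0;
     t₇ * (t₄ - 1), (t₄ - 1) * (t₁ * t₇ - 1), 0, t₂ * (1 - t₁ * t₇), 0, 0, t₄ - 1;
     1 - t₇, t₁ * (1 - t₇), 0, t₁ * t₂ * (1 - t₇), 0, 0, t₁ * t₂ * t₄ - 1;
     0, 1 - t₇, 0, 0, 0, 0, t₂ - 1;
     0, 0, 1 - t₇, (t₃ - 1) * (1 - t₇), 0, 0, t₄ * (t₃ - 1)]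

/-- The `d`-th characteristic variety of the deleted B₃ arrangement `D`:
points `x` of the algebraic torus `(ℂ*)⁸` such that `(x₁,…,x₇) ∈ V_d(D*)`,
i.e. `rank A(x₁,…,x₇) < 7 - d`, and `x₁x₂⋯x₈ = 1`. -/
noncomputable def VD (d : ℕ) : Set (Fin 8 → ℂ) :=
  {x | (∀ i, x i ≠ 0) ∧
       (alexD (x 0) (x 1) (x 2) (x 3) (x 4) (x 5) (x 6)).rank < 7 - d ∧
       x 0 * x 1 * x 2 * x 3 * x 4 * x 5 * x 6 * x 7 = 1}

lemma rank_le_of_two_ker {A : Matrix (Fin 12) (Fin 7) ℂ} (v w : Fin 7 → ℂ)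
    (hv : A.mulVec v = 0) (hw : A.mulVec w = 0)
    (hli : LinearIndependent ℂ ![v, w]) : A.rank ≤ 5 := by
  have hspan : Submodule.span ℂ (Set.range ![v, w]) ≤ LinearMap.ker A.mulVecLin := by
    rw [Submodule.span_le]
    rintro x ⟨i, rfl⟩
    fin_cases i
    · simpa [Matrix.mulVecLin] using hv
    · simpa [Matrix.mulVecLin] using hw
  have h2 : 2 ≤ Module.finrank ℂ (LinearMap.ker A.mulVecLin) := by
    have hc := finrank_span_eq_card hli
    simpa [hc] using Submodule.finrank_mono hspan
  have h := LinearMap.finrank_range_add_finrank_ker A.mulVecLin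
  rw [Module.finrank_pi, Fintype.card_fin] at h
  rw [Matrix.rank]
  omega


theorem braid_component_Pi2_in_V1 (s t : ℂ) (hs : s ≠ 0) (ht : t ≠ 0) :
    (alexD 1 s t ((s * t)⁻¹) ((s * t)⁻¹) t 1).rank ≤ 5 ∧
    (![1, s, t, (s * t)⁻¹, (s * t)⁻¹, t, 1, s] : Fin 8 → ℂ) ∈ VD 1 := by
  have hst : s * t ≠ 0 := mul_ne_zero hs ht
  have hv : (alexD 1 s t ((s * t)⁻¹) ((s * t)⁻¹) t 1).mulVec ![0, -s, 1 - t, 1, 1, 0, 0] = 0 := by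
    rw [alexD]
    simp only [Matrix.cons_mulVec, Matrix.cons_dotProduct, Matrix.empty_mulVec,
      Matrix.dotProduct_of_isEmpty, Matrix.cons_val_zero, Matrix.cons_val_one, Matrix.head_cons, Matrix.tail_cons]
    funext i
    fin_cases i <;>
      first
        | rfl
        | (simp [Matrix.vecHead, Matrix.vecTail] <;>
           first | rfl | (field_simp; try ring))
  have hw : (alexD 1 s t ((s * t)⁻¹) ((s * t)⁻¹) t 1).mulVec ![0, -s, 1, 0, 0, s * t, 0] = 0 := by
    rw [alexD]
    simp only [Matrix.cons_mulVec, Matrix.cons_dotProduct, Matrix.empty_mulVec,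
      Matrix.dotProduct_of_isEmpty, Matrix.cons_val_zero, Matrix.cons_val_one, Matrix.head_cons, Matrix.tail_cons]
    funext i
    fin_cases i <;>
      first
        | rfl
        | (simp [Matrix.vecHead, Matrix.vecTail] <;>
           first | rfl | (field_simp; try ring))
  have hli : LinearIndependent ℂ ![(![0, -s, 1 - t, 1, 1, 0, 0] : Fin 7 → ℂ), ![0, -s, 1, 0, 0, s * t, 0]] := by
    rw [LinearIndependent.pair_iff]
    intro a b hab
    have h3 : a * 1 + b * 0 = 0 := congrFun hab 3
    have h5 : a * 0 + b * (s * t) = 0 := congrFun hab 5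
    have ha : a = 0 := by linear_combination h3
    refine ⟨ha, ?_⟩
    have hb : b * (s * t) = 0 := by linear_combination h5
    rcases mul_eq_zero.mp hb with h | h
    · exact h
    · exact absurd h hst
  have hrank : (alexD 1 s t ((s * t)⁻¹) ((s * t)⁻¹) t 1).rank ≤ 5 :=
    rank_le_of_two_ker _ _ hv hw hli
  refine ⟨hrank, ?_, ?_, ?_⟩
  · intro i
    fin_cases i <;>
      simp only [Matrix.cons_val_zero, Matrix.cons_val_one, Matrix.head_cons,
        Matrix.cons_val_succ] <;>
      first
        | exact one_ne_zero
        | exact hs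
        | exact ht
        | exact inv_ne_zero hst
  · show (alexD 1 s t ((s * t)⁻¹) ((s * t)⁻¹) t 1).rank < 7 - 1
    omega
  · show (1 : ℂ) * s * t * (s * t)⁻¹ * (s * t)⁻¹ * t * 1 * s = 1
    field_simp
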